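/- Let M' be a stable matching in the six-copy duplicated instance, M its projection, and N any matching with e=(u,w)∈N, both endpoints matched in M'. If M'(M(u)) is of type x, y, or z and M'(M(w)) is of type a, b, or c, then both u and w vote +1 when comparing M to N, i.e., the sum of their γ-votes equals +2. -/

import Mathlib

open Finset
open scoped Classical
noncomputable section

/-- A bipartite preference instance: bipartite (multi)graph `G=(U,W;E)` where each
edge `e` has endpoints `src e ∈ U`, `dst e ∈ W`, and every vertex has a preference
valuation over edges (only values on incident edges are relevant); the valuation of
being unmatched (`∅`) is `0`. -/
structure PrefInst (U W E : Type) where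
  src : E → U
  dst : E → W
  pU : U → E → ℝ
  pW : W → E → ℝ

namespace PrefInst

variable {U W E : Type} [DecidableEq U] [DecidableEq W] [DecidableEq E]

/-- `M` is a matching: no two distinct edges of `M` share an endpoint. -/
def IsMatching (I : PrefInst U W E) (M : Finset E) : Prop :=
  ∀ e ∈ M, ∀ f ∈ M, e ≠ f → I.src e ≠ I.src f ∧ I.dst e ≠ I.dst f

/-- The edge of `M` incident to `u ∈ U` (if any): `M(u)`. -/
def mU (I : PrefInst U W E) (M : Finset E) (u : U) : Option E :=
  (M.filter fun e => I.src e = u).toList.head?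

/-- The edge of `M` incident to `w ∈ W` (if any): `M(w)`. -/
def mW (I : PrefInst U W E) (M : Finset E) (w : W) : Option E :=
  (M.filter fun e => I.dst e = w).toList.head?

/-- Valuation by `u` of a possible partner edge, with `p_u(∅) = 0`. -/
def valU (I : PrefInst U W E) (u : U) : Option E → ℝ
  | none => 0
  | some e => I.pU u e

def valW (I : PrefInst U W E) (w : W) : Option E → ℝ
  | none => 0
  | some e => I.pW w e

/-- `M` is maximal: no edge can be added keeping it a matching. -/
def Maximal (I : PrefInst U W E) (M : Finset E) : Prop :=
  ∀ e ∉ M, ¬ I.IsMatching (insert e M)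

/-- Edge `e ∉ M` blocks `M` in the weak-stability sense: both endpoints strictly improve. -/
def Blocks (I : PrefInst U W E) (M : Finset E) (e : E) : Prop :=
  e ∉ M ∧ I.valU (I.src e) (I.mU M (I.src e)) < I.pU (I.src e) e ∧
    I.valW (I.dst e) (I.mW M (I.dst e)) < I.pW (I.dst e) e

/-- Weak stability: no blocking edge. -/
def WeaklyStable (I : PrefInst U W E) (M : Finset E) : Prop :=
  ∀ e, ¬ I.Blocks M e

/-- Edge `e ∉ M` γ-min blocks `M`: both endpoints improve by at least their γ-threshold. -/
def GBlocks (I : PrefInst U W E) (γU γW : E → ℝ) (M : Finset E) (e : E) : Prop :=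
  e ∉ M ∧ I.valU (I.src e) (I.mU M (I.src e)) + γU e ≤ I.pU (I.src e) e ∧
    I.valW (I.dst e) (I.mW M (I.dst e)) + γW e ≤ I.pW (I.dst e) e

/-- γ-min stability: no γ-min blocking edge. -/
def GMinStable (I : PrefInst U W E) (γU γW : E → ℝ) (M : Finset E) : Prop :=
  ∀ e, ¬ I.GBlocks γU γW M e

/-- Standard vote of `u` comparing `M` to `N`: `+1` if strictly better in `M`,
`-1` if strictly better in `N`, `0` on equal value. -/
def sVoteU (I : PrefInst U W E) (M N : Finset E) (u : U) : ℤ :=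
  if I.valU u (I.mU M u) = I.valU u (I.mU N u) then 0
  else if I.valU u (I.mU M u) < I.valU u (I.mU N u) then -1 else 1

def sVoteW (I : PrefInst U W E) (M N : Finset E) (w : W) : ℤ :=
  if I.valW w (I.mW M w) = I.valW w (I.mW N w) then 0
  else if I.valW w (I.mW M w) < I.valW w (I.mW N w) then -1 else 1

/-- Weak vote of `u`: `0` if same partner, `-1` on strict improvement in `N`,
`+1` otherwise (partner changed without strict improvement). -/
def wVoteU (I : PrefInst U W E) (M N : Finset E) (u : U) : ℤ :=
  if I.mU M u = I.mU N u then 0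
  else if I.valU u (I.mU M u) < I.valU u (I.mU N u) then -1 else 1

def wVoteW (I : PrefInst U W E) (M N : Finset E) (w : W) : ℤ :=
  if I.mW M w = I.mW N w then 0
  else if I.valW w (I.mW M w) < I.valW w (I.mW N w) then -1 else 1

/-- Super vote of `u`: `0` if same partner, `-1` if the new partner is weakly
preferred (and different), `+1` only on strict worsening. -/
def supVoteU (I : PrefInst U W E) (M N : Finset E) (u : U) : ℤ :=
  if I.mU M u = I.mU N u then 0
  else if I.valU u (I.mU M u) ≤ I.valU u (I.mU N u) then -1 else 1

def supVoteW (I : PrefInst U W E) (M N : Finset E) (w : W) : ℤ :=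
  if I.mW M w = I.mW N w then 0
  else if I.valW w (I.mW M w) ≤ I.valW w (I.mW N w) then -1 else 1

/-- γ-vote of `u`: `0` if same partner; `-1` if `p_u(N(u)) ≥ p_u(M(u)) + γ_{N(u)}^u`;
`+1` otherwise (partner changed without a γ-sized improvement). -/
def gVoteU (I : PrefInst U W E) (γU : E → ℝ) (M N : Finset E) (u : U) : ℤ :=
  if I.mU M u = I.mU N u then 0
  else match I.mU N u with
    | none => 1
    | some e => if I.valU u (I.mU M u) + γU e ≤ I.pU u e then -1 else 1

def gVoteW (I : PrefInst U W E) (γW : E → ℝ) (M N : Finset E) (w : W) : ℤ :=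
  if I.mW M w = I.mW N w then 0
  else match I.mW N w with
    | none => 1
    | some e => if I.valW w (I.mW M w) + γW e ≤ I.pW w e then -1 else 1

variable [Fintype U] [Fintype W]

/-- Popularity (standard votes): `M` never loses a head-to-head comparison. -/
def Popular (I : PrefInst U W E) (M : Finset E) : Prop :=
  ∀ N, I.IsMatching N → 0 ≤ (∑ u, I.sVoteU M N u) + ∑ w, I.sVoteW M N w

/-- Weak popularity. -/
def WeaklyPopular (I : PrefInst U W E) (M : Finset E) : Prop :=
  ∀ N, I.IsMatching N → 0 ≤ (∑ u, I.wVoteU M N u) + ∑ w, I.wVoteW M N w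

/-- Super popularity. -/
def SuperPopular (I : PrefInst U W E) (M : Finset E) : Prop :=
  ∀ N, I.IsMatching N → 0 ≤ (∑ u, I.supVoteU M N u) + ∑ w, I.supVoteW M N w

/-- γ-popularity. -/
def GammaPopular (I : PrefInst U W E) (γU γW : E → ℝ) (M : Finset E) : Prop :=
  ∀ N, I.IsMatching N → 0 ≤ (∑ u, I.gVoteU γU M N u) + ∑ w, I.gVoteW γW M N w

end PrefInst
end

namespace PrefInst

variable {U W E : Type} [DecidableEq U] [DecidableEq W] [DecidableEq E]

/-- The six-copy duplicated instance: every edge `e` is replaced by the six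
parallel copies `(e,0)=a(e), (e,1)=b(e), (e,2)=c(e), (e,3)=x(e), (e,4)=y(e),
(e,5)=z(e)`, with given (strict) preference valuations `pU'`, `pW'`. -/
def dup (I : PrefInst U W E) (pU' : U → E × Fin 6 → ℝ) (pW' : W → E × Fin 6 → ℝ) :
    PrefInst U W (E × Fin 6) where
  src := fun d => I.src d.1
  dst := fun d => I.dst d.1
  pU := pU'
  pW := pW'

/-- `pU'`, `pW'` are valid strict rankings of the six copies:
side `U` ranks `a ⪰^γ b ≻ c ≻ x ⪰^γ y ≻ z`, side `W` ranks
`z ⪰^γ y ≻ x ≻ c ⪰^γ b ≻ a`; copies of the same (non-`b`,`y`) type are ordered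
according to `p_v` (remaining ties broken arbitrarily), and `b(f)` is ranked
above `a(e)` iff `p_v(f) ≥ p_v(e) + γ_f^v` (similarly `y(f)` above `x(e)`). -/
structure DupValid (I : PrefInst U W E) (γU γW : E → ℝ)
    (pU' : U → E × Fin 6 → ℝ) (pW' : W → E × Fin 6 → ℝ) : Prop where
  strictU : ∀ u d₁ d₂, I.src d₁.1 = u → I.src d₂.1 = u → pU' u d₁ = pU' u d₂ → d₁ = d₂
  strictW : ∀ w d₁ d₂, I.dst d₁.1 = w → I.dst d₂.1 = w → pW' w d₁ = pW' w d₂ → d₁ = d₂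
  U_b_a : ∀ u e f, (pU' u (e, 0) < pU' u (f, 1) ↔ I.pU u e + γU f ≤ I.pU u f)
  U_a_c : ∀ u e f, pU' u (f, 2) < pU' u (e, 0)
  U_b_c : ∀ u e f, pU' u (f, 2) < pU' u (e, 1)
  U_c_x : ∀ u e f, pU' u (f, 3) < pU' u (e, 2)
  U_x_y : ∀ u e f, (pU' u (e, 3) < pU' u (f, 4) ↔ I.pU u e + γU f ≤ I.pU u f)
  U_x_z : ∀ u e f, pU' u (f, 5) < pU' u (e, 3)
  U_y_z : ∀ u e f, pU' u (f, 5) < pU' u (e, 4)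
  U_mono : ∀ u e f, ∀ t : Fin 6, t = 0 ∨ t = 2 ∨ t = 3 ∨ t = 5 →
    I.pU u f < I.pU u e → pU' u (f, t) < pU' u (e, t)
  W_z_y : ∀ w e f, (pW' w (e, 5) < pW' w (f, 4) ↔ I.pW w e + γW f ≤ I.pW w f)
  W_z_x : ∀ w e f, pW' w (f, 3) < pW' w (e, 5)
  W_y_x : ∀ w e f, pW' w (f, 3) < pW' w (e, 4)
  W_x_c : ∀ w e f, pW' w (f, 2) < pW' w (e, 3)
  W_c_b : ∀ w e f, (pW' w (e, 2) < pW' w (f, 1) ↔ I.pW w e + γW f ≤ I.pW w f)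
  W_c_a : ∀ w e f, pW' w (f, 0) < pW' w (e, 2)
  W_b_a : ∀ w e f, pW' w (f, 0) < pW' w (e, 1)
  W_mono : ∀ w e f, ∀ t : Fin 6, t = 0 ∨ t = 2 ∨ t = 3 ∨ t = 5 →
    I.pW w f < I.pW w e → pW' w (f, t) < pW' w (e, t)

end PrefInst

namespace PrefInst

variable {U W E : Type} [DecidableEq U] [DecidableEq W] [DecidableEq E]

lemma mU_eq_some' (I : PrefInst U W E) {M : Finset E} (hM : I.IsMatching M)
    {d : E} {u : U} (hd : d ∈ M) (hu : I.src d = u) : I.mU M u = some d := by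
  classical
  have hfil : M.filter (fun e => I.src e = u) = {d} := by
    ext f
    simp only [Finset.mem_filter, Finset.mem_singleton]
    constructor
    · rintro ⟨hf, hfu⟩
      by_contra hne
      exact (hM f hf d hd hne).1 (hfu.trans hu.symm)
    · rintro rfl; exact ⟨hd, hu⟩
  rw [PrefInst.mU, hfil]
  simp

lemma mW_eq_some' (I : PrefInst U W E) {M : Finset E} (hM : I.IsMatching M)
    {d : E} {w : W} (hd : d ∈ M) (hw : I.dst d = w) : I.mW M w = some d := by
  classical
  have hfil : M.filter (fun e => I.dst e = w) = {d} := by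
    ext f
    simp only [Finset.mem_filter, Finset.mem_singleton]
    constructor
    · rintro ⟨hf, hfw⟩
      by_contra hne
      exact (hM f hf d hd hne).2 (hfw.trans hw.symm)
    · rintro rfl; exact ⟨hd, hw⟩
  rw [PrefInst.mW, hfil]
  simp

lemma dup_proj_isMatching (I : PrefInst U W E) (pU' : U → E × Fin 6 → ℝ)
    (pW' : W → E × Fin 6 → ℝ) {M' : Finset (E × Fin 6)}
    (h : (I.dup pU' pW').IsMatching M') : I.IsMatching (M'.image Prod.fst) := by
  intro a ha b hb hab
  rcases Finset.mem_image.mp ha with ⟨d, hd, rfl⟩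
  rcases Finset.mem_image.mp hb with ⟨d', hd', rfl⟩
  have hne : d ≠ d' := fun hh => hab (congrArg Prod.fst hh)
  exact h d hd d' hd' hne

end PrefInst

open PrefInst in
/-- `M'` stable in the duplicated instance, `M` its projection,
`e=(u,w) ∈ N` with both endpoints matched in `M'`. If `M'(M(u))` is of type
`x`, `y` or `z` and `M'(M(w))` is of type `a`, `b` or `c`, then both `u` and `w`
vote `+1` comparing `M` to `N`, so their γ-votes sum to `+2`. -/
theorem dup_xyz_abc_vote_sum_two
    {U W E : Type} [DecidableEq U] [DecidableEq W] [DecidableEq E]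
    (I : PrefInst U W E) (γU γW : E → ℝ)
    (hγU : ∀ e, 0 < γU e) (hγW : ∀ e, 0 < γW e)
    (hpU : ∀ u e, 0 ≤ I.pU u e) (hpW : ∀ w e, 0 ≤ I.pW w e)
    (pU' : U → E × Fin 6 → ℝ) (pW' : W → E × Fin 6 → ℝ)
    (hvalid : I.DupValid γU γW pU' pW')
    (M' : Finset (E × Fin 6))
    (hM' : (I.dup pU' pW').IsMatching M')
    (hstab : (I.dup pU' pW').WeaklyStable M')
    (N : Finset E) (hN : I.IsMatching N) (e : E) (he : e ∈ N)
    (d₁ d₂ : E × Fin 6) (hd₁ : d₁ ∈ M') (hd₂ : d₂ ∈ M')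
    (hd₁u : I.src d₁.1 = I.src e) (hd₂w : I.dst d₂.1 = I.dst e)
    (ht₁ : d₁.2 = 3 ∨ d₁.2 = 4 ∨ d₁.2 = 5)
    (ht₂ : d₂.2 = 0 ∨ d₂.2 = 1 ∨ d₂.2 = 2) :
    I.gVoteU γU (M'.image Prod.fst) N (I.src e) = 1 ∧
    I.gVoteW γW (M'.image Prod.fst) N (I.dst e) = 1 ∧
    I.gVoteU γU (M'.image Prod.fst) N (I.src e) +
      I.gVoteW γW (M'.image Prod.fst) N (I.dst e) = 2 := by
  classical
  set u := I.src e with hu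
  set w := I.dst e with hw
  set M : Finset E := M'.image Prod.fst with hMdef
  have hM : I.IsMatching M := I.dup_proj_isMatching pU' pW' hM'
  have hd₁M : d₁.1 ∈ M := Finset.mem_image_of_mem _ hd₁
  have hd₂M : d₂.1 ∈ M := Finset.mem_image_of_mem _ hd₂
  have hne12 : d₁ ≠ d₂ := by
    intro h
    rw [h] at ht₁
    rcases ht₁ with h1 | h1 | h1 <;> rcases ht₂ with h2 | h2 | h2 <;>
      (rw [h1] at h2; exact absurd h2 (by decide))
  have hboth : ¬ (d₁.1 = e ∧ d₂.1 = e) := by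
    rintro ⟨h1, h2⟩
    exact (hM' d₁ hd₁ d₂ hd₂ hne12).1 (hd₁u.trans (show u = I.src d₂.1 by rw [h2]))
  have h1e : d₁.1 ≠ e := by
    intro h1
    refine hboth ⟨h1, ?_⟩
    by_contra h2
    exact (hM d₂.1 hd₂M e (h1 ▸ hd₁M) h2).2 hd₂w
  have h2e : d₂.1 ≠ e := by
    intro h2
    refine hboth ⟨?_, h2⟩
    by_contra h1
    exact (hM d₁.1 hd₁M e (h2 ▸ hd₂M) h1).1 hd₁u
  have hmMu : I.mU M u = some d₁.1 := I.mU_eq_some' hM hd₁M hd₁u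
  have hmMw : I.mW M w = some d₂.1 := I.mW_eq_some' hM hd₂M hd₂w
  have hmNu : I.mU N u = some e := I.mU_eq_some' hN he rfl
  have hmNw : I.mW N w = some e := I.mW_eq_some' hN he rfl
  have hmM'u : (I.dup pU' pW').mU M' u = some d₁ :=
    (I.dup pU' pW').mU_eq_some' hM' hd₁ hd₁u
  have hmM'w : (I.dup pU' pW').mW M' w = some d₂ :=
    (I.dup pU' pW').mW_eq_some' hM' hd₂ hd₂w
  -- basic "self" comparisons
  have hyx : ∀ f, pU' u (f, 4) ≤ pU' u (f, 3) := by
    intro f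
    by_contra h
    push_neg at h
    have := (hvalid.U_x_y u f f).mp h
    linarith [hγU f]
  have hbc : ∀ f, pW' w (f, 1) ≤ pW' w (f, 2) := by
    intro f
    by_contra h
    push_neg at h
    have := (hvalid.W_c_b w f f).mp h
    linarith [hγW f]

  -- u strictly prefers b(e) to its partner, unconditionally
  have hu_b : pU' u d₁ < pU' u (e, 1) := by
    have hcb : pU' u (e, 2) < pU' u (e, 1) := hvalid.U_b_c u e e
    have hxc : pU' u (d₁.1, 3) < pU' u (e, 2) := hvalid.U_c_x u e d₁.1
    rcases ht₁ with h | h | h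
    · rw [show d₁ = (d₁.1, d₁.2) from rfl, h]
      exact lt_trans hxc hcb
    · rw [show d₁ = (d₁.1, d₁.2) from rfl, h]
      exact lt_trans (lt_of_le_of_lt (hyx d₁.1) hxc) hcb
    · rw [show d₁ = (d₁.1, d₁.2) from rfl, h]
      exact lt_trans (lt_trans (hvalid.U_x_z u d₁.1 d₁.1) hxc) hcb
  -- w strictly prefers y(e) to its partner, unconditionally
  have hw_y : pW' w d₂ < pW' w (e, 4) := by
    have hxy : pW' w (e, 3) < pW' w (e, 4) := hvalid.W_y_x w e e
    have hcx : pW' w (d₂.1, 2) < pW' w (e, 3) := hvalid.W_x_c w e d₂.1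
    rcases ht₂ with h | h | h
    · rw [show d₂ = (d₂.1, d₂.2) from rfl, h]
      exact lt_trans (lt_trans (hvalid.W_c_a w d₂.1 d₂.1) hcx) hxy
    · rw [show d₂ = (d₂.1, d₂.2) from rfl, h]
      exact lt_trans (lt_of_le_of_lt (hbc d₂.1) hcx) hxy
    · rw [show d₂ = (d₂.1, d₂.2) from rfl, h]
      exact lt_trans hcx hxy
  -- the two conditional blocking arguments
  have hcondU : ¬ (I.pU u d₁.1 + γU e ≤ I.pU u e) := by
    intro hc
    have hx : pU' u (d₁.1, 3) < pU' u (e, 4) := (hvalid.U_x_y u d₁.1 e).mpr hc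
    have hu4 : pU' u d₁ < pU' u (e, 4) := by
      rcases ht₁ with h | h | h
      · rw [show d₁ = (d₁.1, d₁.2) from rfl, h]; exact hx
      · rw [show d₁ = (d₁.1, d₁.2) from rfl, h]; exact lt_of_le_of_lt (hyx d₁.1) hx
      · rw [show d₁ = (d₁.1, d₁.2) from rfl, h]; exact lt_trans (hvalid.U_x_z u d₁.1 d₁.1) hx
    have h4nm : (e, (4 : Fin 6)) ∉ M' := by
      intro hmem
      have hne : (e, (4 : Fin 6)) ≠ d₁ := by
        intro hh; exact h1e (congrArg Prod.fst hh).symm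
      exact (hM' _ hmem d₁ hd₁ hne).1 hd₁u.symm
    refine hstab (e, (4 : Fin 6)) ⟨h4nm, ?_, ?_⟩
    · show (I.dup pU' pW').valU u ((I.dup pU' pW').mU M' u) < pU' u (e, 4)
      rw [hmM'u]; exact hu4
    · show (I.dup pU' pW').valW w ((I.dup pU' pW').mW M' w) < pW' w (e, 4)
      rw [hmM'w]; exact hw_y
  have hcondW : ¬ (I.pW w d₂.1 + γW e ≤ I.pW w e) := by
    intro hc
    have hcx : pW' w (d₂.1, 2) < pW' w (e, 1) := (hvalid.W_c_b w d₂.1 e).mpr hc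
    have hw1 : pW' w d₂ < pW' w (e, 1) := by
      rcases ht₂ with h | h | h
      · rw [show d₂ = (d₂.1, d₂.2) from rfl, h]; exact lt_trans (hvalid.W_c_a w d₂.1 d₂.1) hcx
      · rw [show d₂ = (d₂.1, d₂.2) from rfl, h]; exact lt_of_le_of_lt (hbc d₂.1) hcx
      · rw [show d₂ = (d₂.1, d₂.2) from rfl, h]; exact hcx
    have h1nm : (e, (1 : Fin 6)) ∉ M' := by
      intro hmem
      have hne : (e, (1 : Fin 6)) ≠ d₂ := by
        intro hh; exact h2e (congrArg Prod.fst hh).symm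
      exact (hM' _ hmem d₂ hd₂ hne).2 hd₂w.symm
    refine hstab (e, (1 : Fin 6)) ⟨h1nm, ?_, ?_⟩
    · show (I.dup pU' pW').valU u ((I.dup pU' pW').mU M' u) < pU' u (e, 1)
      rw [hmM'u]; exact hu_b
    · show (I.dup pU' pW').valW w ((I.dup pU' pW').mW M' w) < pW' w (e, 1)
      rw [hmM'w]; exact hw1
  have hvU : I.gVoteU γU M N u = 1 := by
    rw [PrefInst.gVoteU, hmMu, hmNu]
    rw [if_neg (by simp [h1e])]
    simp only [PrefInst.valU]
    exact if_neg hcondU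
  have hvW : I.gVoteW γW M N w = 1 := by
    rw [PrefInst.gVoteW, hmMw, hmNw]
    rw [if_neg (by simp [h2e])]
    simp only [PrefInst.valW]
    exact if_neg hcondW
  exact ⟨hvU, hvW, by rw [hvU, hvW]; norm_num⟩
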